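/- Let p and q* be integers with 0 < q* < p and gcd(p, q*) = 1, and let w be a rational number. For each positive integer k set g(k) := (⌊(q*/p)·k⌋ − ⌊w·k⌋)/k. Then 0 is the least element of the set { g(k) : k a positive integer } if and only if 0 ≤ w ≤ q*/p. -/

import Mathlib

/-- Equation (5.18): with `g k = (⌊(q*/p)k⌋ - ⌊wk⌋)/k`, `0` is the least element of
`{g k : k > 0}` iff `0 ≤ w ≤ q*/p`. -/
theorem stmt_15 (p qstar : ℤ) (hq : 0 < qstar) (hqp : qstar < p)
    (hgcd : Int.gcd p qstar = 1) (w : ℚ) :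
    IsLeast {x : ℚ | ∃ k : ℕ, 0 < k ∧
        x = ((⌊((qstar : ℚ)/(p : ℚ)) * (k:ℚ)⌋ : ℚ) - (⌊w * (k:ℚ)⌋ : ℚ))/(k:ℚ)} 0 ↔
      (0 ≤ w ∧ w ≤ (qstar : ℚ)/(p : ℚ)) := by
  have hp : (0:ℤ) < p := lt_trans hq hqp
  have hp' : (0:ℚ) < (p:ℚ) := by exact_mod_cast hp
  set r : ℚ := (qstar:ℚ)/(p:ℚ) with hrdef
  have hr0 : 0 < r := div_pos (by exact_mod_cast hq) hp'
  have hr1 : r < 1 := by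
    rw [hrdef, div_lt_one hp']; exact_mod_cast hqp
  constructor
  · rintro ⟨⟨k, hk, hzero⟩, hlb⟩
    have hk0 : (0:ℚ) < (k:ℚ) := by exact_mod_cast hk
    have heq : (⌊r * (k:ℚ)⌋ : ℚ) = (⌊w * (k:ℚ)⌋ : ℚ) := by
      have := hzero
      field_simp at this
      rw [mul_comm (k:ℚ) w] at this
      linarith
    constructor
    · by_contra hw
      push_neg at hw
      have h1 : ⌊w * (k:ℚ)⌋ < 0 := by
        rw [Int.floor_lt]
        push_cast
        nlinarith
      have h2 : (0:ℤ) ≤ ⌊r * (k:ℚ)⌋ := by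
        rw [Int.le_floor]
        push_cast
        nlinarith
      have : ⌊r * (k:ℚ)⌋ = ⌊w * (k:ℚ)⌋ := by exact_mod_cast heq
      omega
    · by_contra hw
      push_neg at hw
      have hwr : 0 < w - r := by linarith
      obtain ⟨n, hn⟩ := exists_nat_gt (1 / (w - r))
      have hninv : 0 < 1 / (w - r) := by positivity
      have hn0 : (0:ℚ) < (n:ℚ) := lt_trans hninv hn
      have hnn : 0 < n := by exact_mod_cast hn0
      have hgap : r * n + 1 < w * n := by
        have : 1 < (w - r) * n := by
          rw [div_lt_iff₀ hwr] at hn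
          nlinarith
        nlinarith
      have hfl : r * (n:ℚ) < (⌊w * (n:ℚ)⌋ : ℚ) := by
        have := Int.lt_floor_add_one (w * (n:ℚ))
        linarith
      have hlt : ⌊r * (n:ℚ)⌋ < ⌊w * (n:ℚ)⌋ := by
        have h1 : (⌊r * (n:ℚ)⌋ : ℚ) ≤ r * n := Int.floor_le _
        exact_mod_cast lt_of_le_of_lt h1 hfl
      have hmem := hlb ⟨n, hnn, rfl⟩
      have hlt' : ((⌊r * (n:ℚ)⌋ : ℚ) - (⌊w * (n:ℚ)⌋ : ℚ)) / (n:ℚ) < 0 := by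
        apply div_neg_of_neg_of_pos _ hn0
        have : (⌊r * (n:ℚ)⌋ : ℚ) < (⌊w * (n:ℚ)⌋ : ℚ) := by exact_mod_cast hlt
        linarith
      linarith
  · rintro ⟨hw0, hwr⟩
    constructor
    · refine ⟨1, one_pos, ?_⟩
      have h1 : ⌊r * ((1:ℕ):ℚ)⌋ = 0 := by
        rw [Int.floor_eq_zero_iff]
        constructor <;> simp <;> linarith
      have h2 : ⌊w * ((1:ℕ):ℚ)⌋ = 0 := by
        rw [Int.floor_eq_zero_iff]
        constructor <;> simp <;> linarith
      rw [h1, h2]; norm_num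
    · rintro x ⟨k, hk, rfl⟩
      have hk0 : (0:ℚ) < (k:ℚ) := by exact_mod_cast hk
      have hfl : ⌊w * (k:ℚ)⌋ ≤ ⌊r * (k:ℚ)⌋ :=
        Int.floor_le_floor (by nlinarith)
      apply div_nonneg _ (le_of_lt hk0)
      have : (⌊w * (k:ℚ)⌋ : ℚ) ≤ (⌊r * (k:ℚ)⌋ : ℚ) := by exact_mod_cast hfl
      linarith
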